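/- arXiv:2206.12003 — 4 statements merged into one kernel-verified Lean document; each statement's English description precedes it below -/
import Mathlib

section
/- The quantity F1 = (1−δ3δ1x2²)/(1−δ1δ2x3²) is a conserved quantity of the Hirota–Kimura discrete Euler top: if x̃ = f(x,δ) where f is the explicit birational map with x̃1 = (x1+2δ1x2x3+x1(−δ2δ3x1²+δ1δ3x2²+δ1δ2x3²))/Δ, x̃2 = (x2+2δ2x1x3+x2(δ2δ3x1²−δ1δ3x2²+δ1δ2x3²))/Δ, x̃3 = (x3+2δ3x1x2+x3(δ2δ3x1²+δ1δ3x2²−δ1δ2x3²))/Δ, Δ = 1−δ2δ3x1²−δ1δ3x2²−δ1δ2x3²−2δ1δ2δ3x1x2x3, then (1−δ3δ1x̃2²)/(1−δ1δ2x̃3²) = (1−δ3δ1x2²)/(1−δ1δ2x3²). -/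
noncomputable def hkDen (d1 d2 d3 x1 x2 x3 : ℝ) : ℝ :=
  1 - d2*d3*x1^2 - d1*d3*x2^2 - d1*d2*x3^2 - 2*d1*d2*d3*x1*x2*x3

noncomputable def hk1 (d1 d2 d3 x1 x2 x3 : ℝ) : ℝ :=
  (x1 + 2*d1*x2*x3 + x1*(-(d2*d3*x1^2) + d1*d3*x2^2 + d1*d2*x3^2)) / hkDen d1 d2 d3 x1 x2 x3

noncomputable def hk2 (d1 d2 d3 x1 x2 x3 : ℝ) : ℝ :=
  (x2 + 2*d2*x1*x3 + x2*(d2*d3*x1^2 - d1*d3*x2^2 + d1*d2*x3^2)) / hkDen d1 d2 d3 x1 x2 x3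

noncomputable def hk3 (d1 d2 d3 x1 x2 x3 : ℝ) : ℝ :=
  (x3 + 2*d3*x1*x2 + x3*(d2*d3*x1^2 + d1*d3*x2^2 - d1*d2*x3^2)) / hkDen d1 d2 d3 x1 x2 x3

theorem stmt_1 (d1 d2 d3 x1 x2 x3 : ℝ)
    (hΔ : hkDen d1 d2 d3 x1 x2 x3 ≠ 0)
    (hx : 1 - d1*d2*x3^2 ≠ 0)
    (hx' : 1 - d1*d2*(hk3 d1 d2 d3 x1 x2 x3)^2 ≠ 0) :
    (1 - d3*d1*(hk2 d1 d2 d3 x1 x2 x3)^2) / (1 - d1*d2*(hk3 d1 d2 d3 x1 x2 x3)^2)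
      = (1 - d3*d1*x2^2) / (1 - d1*d2*x3^2) := by
  unfold hk2 hk3 at *
  rw [div_eq_div_iff hx' hx]
  rw [div_pow, div_pow] at *
  have hΔ2 : hkDen d1 d2 d3 x1 x2 x3 ^ 2 ≠ 0 := pow_ne_zero 2 hΔ
  field_simp at hx' ⊢
  set D := hkDen d1 d2 d3 x1 x2 x3 with hD
  have : D = 1 - d2*d3*x1^2 - d1*d3*x2^2 - d1*d2*x3^2 - 2*d1*d2*d3*x1*x2*x3 := rfl
  rw [this]
  ring
end

section
/- The map x̃ = f(x,δ) defined by the explicit rational formulas of the Hirota–Kimura discrete Euler top satisfies the implicit equations of motion: x̃1 − x1 = δ1(x̃2x3 + x2x̃3), x̃2 − x2 = δ2(x̃3x1 + x3x̃1), x̃3 − x3 = δ3(x̃1x2 + x1x̃2). -/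
theorem stmt_2 (d1 d2 d3 x1 x2 x3 : ℝ)
    (hΔ : hkDen d1 d2 d3 x1 x2 x3 ≠ 0) :
    hk1 d1 d2 d3 x1 x2 x3 - x1
        = d1 * (hk2 d1 d2 d3 x1 x2 x3 * x3 + x2 * hk3 d1 d2 d3 x1 x2 x3) ∧
    hk2 d1 d2 d3 x1 x2 x3 - x2
        = d2 * (hk3 d1 d2 d3 x1 x2 x3 * x1 + x3 * hk1 d1 d2 d3 x1 x2 x3) ∧
    hk3 d1 d2 d3 x1 x2 x3 - x3
        = d3 * (hk1 d1 d2 d3 x1 x2 x3 * x2 + x1 * hk2 d1 d2 d3 x1 x2 x3) := by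
  unfold hk1 hk2 hk3 at *
  refine ⟨?_, ?_, ?_⟩ <;> field_simp <;> unfold hkDen <;> ring
end

section
/- If the starting condition has its third coordinate negated, the discrete Euler top map satisfies f((x1,x2,−x3), δ)_1 = f(x,−δ)_1, f((x1,x2,−x3), δ)_2 = f(x,−δ)_2, and f((x1,x2,−x3), δ)_3 = −f(x,−δ)_3. -/
theorem stmt_4 (d1 d2 d3 x1 x2 x3 : ℝ)
    (hΔ : hkDen d1 d2 d3 x1 x2 (-x3) ≠ 0)
    (hΔ' : hkDen (-d1) (-d2) (-d3) x1 x2 x3 ≠ 0) :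
    hk1 d1 d2 d3 x1 x2 (-x3) = hk1 (-d1) (-d2) (-d3) x1 x2 x3 ∧
    hk2 d1 d2 d3 x1 x2 (-x3) = hk2 (-d1) (-d2) (-d3) x1 x2 x3 ∧
    hk3 d1 d2 d3 x1 x2 (-x3) = -(hk3 (-d1) (-d2) (-d3) x1 x2 x3) := by
  have hden : hkDen d1 d2 d3 x1 x2 (-x3) = hkDen (-d1) (-d2) (-d3) x1 x2 x3 := by
    unfold hkDen; ring
  refine ⟨?_, ?_, ?_⟩ <;>
    simp only [hk1, hk2, hk3, hden, ← neg_div] <;>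
    rw [div_eq_div_iff hΔ' hΔ'] <;> ring
end

section
/- With notation as in the involution on H ∩ C, the cross product d±(x) × d±(x̂) vanishes, where x̂ = x + v(x)·d±(x); i.e., the ruling direction at the image point is parallel to the ruling direction at the original point (same sign choice). -/
theorem stmt_8 (A B C D s x1 x2 x3 v : ℝ)
    (hABCD : A*B*C*D ≥ 0) (hs : s^2 = A*B*C*D)
    (hH : A*x1^2 + B*x2^2 + C*x3^2 + D = 0)
    (hH' : A*(x1 + v*(A*B*C*x1*x3 - s*B*x2))^2
        + B*(x2 + v*(A*B*C*x2*x3 + s*A*x1))^2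
        + C*(x3 + v*(-(A*B)*(A*x1^2 + B*x2^2)))^2 + D = 0) :
    -- components of x̂ = x + v·d±(x)
    ∀ y1 y2 y3 : ℝ,
      y1 = x1 + v*(A*B*C*x1*x3 - s*B*x2) →
      y2 = x2 + v*(A*B*C*x2*x3 + s*A*x1) →
      y3 = x3 + v*(-(A*B)*(A*x1^2 + B*x2^2)) →
      -- cross product d±(x) × d±(x̂) = 0
      (A*B*C*x2*x3 + s*A*x1) * (-(A*B)*(A*y1^2 + B*y2^2))
        - (-(A*B)*(A*x1^2 + B*x2^2)) * (A*B*C*y2*y3 + s*A*y1) = 0 ∧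
      (-(A*B)*(A*x1^2 + B*x2^2)) * (A*B*C*y1*y3 - s*B*y2)
        - (A*B*C*x1*x3 - s*B*x2) * (-(A*B)*(A*y1^2 + B*y2^2)) = 0 ∧
      (A*B*C*x1*x3 - s*B*x2) * (A*B*C*y2*y3 + s*A*y1)
        - (A*B*C*x2*x3 + s*A*x1) * (A*B*C*y1*y3 - s*B*y2) = 0 := by
  intro y1 y2 y3 h1 h2 h3
  subst h1 h2 h3
  refine ⟨?_, ?_, ?_⟩
  · linear_combination
      (-(A^3*B^4*C*x2^3*v) - A^4*B^3*C*x1^2*x2*v - A^4*B^4*C*s*x1*x2^2*v^2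
        - A^4*B^5*C^2*x2^3*x3*v^2 - A^5*B^3*C*s*x1^3*v^2
        - A^5*B^4*C^2*x1^2*x2*x3*v^2) * hH
      + (-(A^2*B^3*x2^3*v) - A^3*B^2*x1^2*x2*v - A^3*B^3*s*x1*x2^2*v^2
        - A^3*B^4*C*x2^3*x3*v^2 - A^4*B^2*s*x1^3*v^2
        - A^4*B^3*C*x1^2*x2*x3*v^2) * hs
  · linear_combination
      (A^3*B^4*C*x1*x2^2*v - A^3*B^5*C*s*x2^3*v^2 + A^4*B^3*C*x1^3*v
        - A^4*B^4*C*s*x1^2*x2*v^2 + A^4*B^5*C^2*x1*x2^2*x3*v^2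
        + A^5*B^4*C^2*x1^3*x3*v^2) * hH
      + (A^2*B^3*x1*x2^2*v - A^2*B^4*s*x2^3*v^2 + A^3*B^2*x1^3*v
        - A^3*B^3*s*x1^2*x2*v^2 + A^3*B^4*C*x1*x2^2*x3*v^2
        + A^4*B^3*C*x1^3*x3*v^2) * hs
  · linear_combination
      (A^2*B^3*C*s*x2^2*v + A^3*B^2*C*s*x1^2*v) * hH
      + (A*B^2*s*x2^2*v + A^2*B*s*x1^2*v) * hs
end
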